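/- Let S be a numerical semigroup of genus g with 2 ∈ S, and let r ≥ 1 be an integer such that L(2i) = i + 1 for all 1 ≤ i ≤ r, L(g + r) = r + 1, and 2r ≤ g + r. Then g − 1 ≤ r ≤ g. (This is the paper's proposition: if q = 2, K is hyperelliptic, and K has an r-gap structure at ∞, then g − 1 ≤ r ≤ g, where g is the genus of K; hyperellipticity with the paper's model gives 2 ∈ S.) -/

import Mathlib

/-- The genus of a numerical semigroup `S ⊆ ℕ`: the number of gaps, i.e. the cardinality of
`ℕ ∖ S`. -/
noncomputable def NSgenus (S : AddSubmonoid ℕ) : ℕ := Set.ncard ((S : Set ℕ)ᶜ)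

/-- `NSL S n = card {m ∈ S : m ≤ n}`.  (For the Weierstrass semigroup of pole orders at a
rational place `∞`, this is `ℓ(n∞)`.) -/
noncomputable def NSL (S : AddSubmonoid ℕ) (n : ℕ) : ℕ := Set.ncard {m : ℕ | m ∈ S ∧ m ≤ n}

open Classical in
lemma NSL_eq_card (S : AddSubmonoid ℕ) (n : ℕ) :
    NSL S n = ((Finset.range (n+1)).filter (· ∈ S)).card := by
  rw [NSL, ← Set.ncard_coe_finset]
  congr 1
  ext m
  simp [Nat.lt_succ_iff, and_comm]

/-- Let `S` be a numerical semigroup of genus `g` with `2 ∈ S`, and let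
`r ≥ 1` be an integer such that `L(2i) = i + 1` for all `1 ≤ i ≤ r`, `L(g + r) = r + 1`, and
`2r ≤ g + r`.  Then `g − 1 ≤ r ≤ g`.  (If `q = 2`, `K` is hyperelliptic and `K` has an
`r`-gap structure at `∞`, then `g − 1 ≤ r ≤ g`, `g` the genus of `K`.) -/
theorem statement9 (S : AddSubmonoid ℕ) (hfin : ((S : Set ℕ)ᶜ).Finite)
    (g r : ℕ) (hg : NSgenus S = g) (h2 : 2 ∈ S) (hr : 1 ≤ r)
    (hgap1 : ∀ i : ℕ, 1 ≤ i → i ≤ r → NSL S (2 * i) = i + 1)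
    (hgap2 : NSL S (g + r) = r + 1)
    (hgap3 : 2 * r ≤ g + r) :
    g - 1 ≤ r ∧ r ≤ g := by
  classical
  -- all even numbers are in S
  have heven : ∀ k : ℕ, 2 * k ∈ S := by
    intro k
    induction k with
    | zero => simpa using S.zero_mem
    | succ k ih =>
      have h' : 2 * (k+1) = 2 * k + 2 := by ring
      rw [h']; exact S.add_mem ih h2
  -- odd numbers below 2r are gaps
  have hodd_gap : ∀ k : ℕ, k < r → 2 * k + 1 ∉ S := by
    intro k hk hmem
    have h1 := hgap1 (k+1) (by omega) (by omega)
    rw [NSL_eq_card] at h1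
    have hsub : insert (2*k+1) ((Finset.range (k+2)).image (2 * ·)) ⊆
        (Finset.range (2*(k+1)+1)).filter (· ∈ S) := by
      intro m hm
      simp only [Finset.mem_insert, Finset.mem_image, Finset.mem_range] at hm
      simp only [Finset.mem_filter, Finset.mem_range]
      rcases hm with rfl | ⟨j, hj, rfl⟩
      · exact ⟨by omega, hmem⟩
      · exact ⟨by omega, heven j⟩
    have hcard : (insert (2*k+1) ((Finset.range (k+2)).image (2 * ·))).card = k + 3 := by
      rw [Finset.card_insert_of_notMem, Finset.card_image_of_injective _
        (fun a b h => by omega), Finset.card_range]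
      simp only [Finset.mem_image, Finset.mem_range]
      rintro ⟨j, hj, hje⟩; omega
    have := Finset.card_le_card hsub
    omega
  set G : Set ℕ := {k | 2 * k + 1 ∉ S} with hG
  have hinj : Function.Injective (fun k : ℕ => 2 * k + 1) := by
    intro a b h; simp only [] at h; omega
  have hgaps : (S : Set ℕ)ᶜ = (fun k : ℕ => 2 * k + 1) '' G := by
    ext m
    simp only [Set.mem_compl_iff, Set.mem_image, SetLike.mem_coe]
    constructor
    · intro hm
      rcases Nat.even_or_odd m with ⟨k, hk⟩ | ⟨k, hk⟩
      · exact absurd (by rw [hk]; have := heven k; convert this using 1; ring) hm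
      · exact ⟨k, by rwa [hG, Set.mem_setOf_eq, ← hk], hk.symm⟩
    · rintro ⟨k, hk, rfl⟩; exact hk
  have hGfin : G.Finite := by
    have : ((fun k : ℕ => 2 * k + 1) '' G).Finite := hgaps ▸ hfin
    exact Set.Finite.of_finite_image this (hinj.injOn)
  have hGcard : G.ncard = g := by
    rw [← hg, NSgenus, hgaps, Set.ncard_image_of_injective _ hinj]
  -- G is downward closed
  have hdown : ∀ j k : ℕ, j ≤ k → k ∈ G → j ∈ G := by
    intro j k hjk hk hjS
    apply hk
    have : 2 * j + 1 + 2 * (k - j) ∈ S := S.add_mem hjS (heven _)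
    convert this using 1; omega
  -- G = Iio g
  have hGIio : G = Set.Iio g := by
    apply Set.eq_of_subset_of_ncard_le
    · intro k hk
      have hIic : Set.Iic k ⊆ G := fun j hj => hdown j k hj hk
      have h1 : (Set.Iic k).ncard ≤ G.ncard := Set.ncard_le_ncard hIic hGfin
      have h2 : (Set.Iic k).ncard = k + 1 := by
        rw [← Finset.coe_Iic, Set.ncard_coe_finset, Nat.card_Iic]
      simp only [Set.mem_Iio]
      omega
    · rw [hGcard, ← Finset.coe_Iio, Set.ncard_coe_finset, Nat.card_Iio]
    · exact Set.finite_Iio g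
  -- r ≤ g
  have hrg : r ≤ g := by
    have : r - 1 ∈ G := hodd_gap (r-1) (by omega)
    rw [hGIio] at this
    simp only [Set.mem_Iio] at this
    omega
  refine ⟨?_, hrg⟩
  -- g - 1 ≤ r, by contradiction
  by_contra hc
  have hgr : r + 2 ≤ g := by omega
  have hbig : 2 * (g - 1) + 1 ∉ S := by
    have : g - 1 ∈ G := by rw [hGIio]; simp; omega
    exact this
  -- counting in range (g + r + 1)
  have h1 := hgap2
  rw [NSL_eq_card] at h1
  have hsplit := Finset.card_filter_add_card_filter_not
    (s := Finset.range (g + r + 1)) (p := (· ∈ S))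
  rw [Finset.card_range, h1] at hsplit
  -- the non-members form a subset of gaps minus {2g-1}
  have hsub : (↑((Finset.range (g + r + 1)).filter (fun m => ¬ m ∈ S)) : Set ℕ) ⊆
      (S : Set ℕ)ᶜ \ {2 * (g - 1) + 1} := by
    intro m hm
    simp only [Finset.coe_filter, Set.mem_setOf_eq, Finset.mem_range] at hm
    refine ⟨hm.2, ?_⟩
    simp only [Set.mem_singleton_iff]
    omega
  have hcard1 : ((S : Set ℕ)ᶜ \ {2 * (g - 1) + 1}).ncard = g - 1 := by
    rw [Set.ncard_diff_singleton_of_mem (show 2 * (g - 1) + 1 ∈ (S : Set ℕ)ᶜ from hbig)]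
    rw [show ((S:Set ℕ)ᶜ).ncard = g from hg]
  have := Set.ncard_le_ncard hsub hfin.diff
  rw [Set.ncard_coe_finset, hcard1] at this
  omega
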